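/- arXiv:1606.08584 — 2 statements merged into one kernel-verified Lean document; each statement's English description precedes it below -/
import Mathlib

section
/- Let G be a group of nilpotency class 2 with elements a, b and central elements c₁, c₂, and suppose the subgroup generated by [a,b], c₁, c₂ is free abelian with basis [a,b], c₁, c₂. Given an integer β and integers ε₁, ε₂, ε₃, ε₄, the product (a^{-β}c₁)^{ε₁}(b⁻¹c₂)^{ε₂}(a^{β}c₁⁻¹)^{ε₃}(b c₂⁻¹)^{ε₄} equals [a,b]^{β ε₁ ε₂} if and only if ε₁ = ε₃ and ε₂ = ε₄. -/
/-- In a class-2 group with `c₁, c₂` central and `[a,b], c₁, c₂` a basis of a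
free abelian subgroup, the product
`(a^{-β}c₁)^{ε₁}(b⁻¹c₂)^{ε₂}(a^{β}c₁⁻¹)^{ε₃}(bc₂⁻¹)^{ε₄}` equals
`[a,b]^{βε₁ε₂}` iff `ε₁ = ε₃` and `ε₂ = ε₄`. -/
theorem knapsack_quadratic_gadget {G : Type*} [Group G]
    (hc : ∀ x y g : G, (x⁻¹ * y⁻¹ * x * y) * g = g * (x⁻¹ * y⁻¹ * x * y))
    (a b c₁ c₂ : G)
    (hc₁z : ∀ g : G, c₁ * g = g * c₁) (hc₂z : ∀ g : G, c₂ * g = g * c₂)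
    (hbasis : Function.Injective fun p : ℤ × ℤ × ℤ =>
      (a⁻¹ * b⁻¹ * a * b) ^ p.1 * c₁ ^ p.2.1 * c₂ ^ p.2.2)
    (β ε₁ ε₂ ε₃ ε₄ : ℤ) :
    (a ^ (-β) * c₁) ^ ε₁ * (b⁻¹ * c₂) ^ ε₂ * (a ^ β * c₁⁻¹) ^ ε₃ * (b * c₂⁻¹) ^ ε₄ =
      (a⁻¹ * b⁻¹ * a * b) ^ (β * ε₁ * ε₂) ↔ ε₁ = ε₃ ∧ ε₂ = ε₄ := by
  set z : G := a⁻¹ * b⁻¹ * a * b with hzdef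
  have hz : ∀ g : G, z * g = g * z := hc a b
  -- Commute facts
  have hzx : ∀ (x : G) (k : ℤ), Commute (z ^ k) x := fun x k => (show Commute z x from hz x).zpow_left k
  have hc1x : ∀ (x : G) (k : ℤ), Commute (c₁ ^ k) x := fun x k => (show Commute c₁ x from hc₁z x).zpow_left k
  have hc2x : ∀ (x : G) (k : ℤ), Commute (c₂ ^ k) x := fun x k => (show Commute c₂ x from hc₂z x).zpow_left k
  -- conjugation
  have hconj : ∀ m : ℤ, b⁻¹ * a ^ m * b = a ^ m * z ^ m := by
    intro m
    have h1 : b⁻¹ * a * (b⁻¹)⁻¹ = a * z := by rw [hzdef]; group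
    calc b⁻¹ * a ^ m * b = (b⁻¹ * a * (b⁻¹)⁻¹) ^ m := by rw [conj_zpow]; simp
      _ = (a * z) ^ m := by rw [h1]
      _ = a ^ m * z ^ m := ((show Commute a z from (hz a).symm).mul_zpow m)
  -- key: a^m b^n = b^n (a^m z^(m n))
  have hkey : ∀ m n : ℤ, a ^ m * b ^ n = b ^ n * (a ^ m * z ^ (m * n)) := by
    intro m n
    induction n using Int.induction_on with
    | zero => simp
    | succ n ih =>
        have hstep : a ^ m * b = b * (a ^ m * z ^ m) := by
          rw [← hconj m]; group
        calc a ^ m * b ^ ((n : ℤ) + 1) = (a ^ m * b ^ (n : ℤ)) * b := by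
              rw [zpow_add_one, mul_assoc]
          _ = b ^ (n : ℤ) * (a ^ m * z ^ (m * n)) * b := by rw [ih]
          _ = b ^ (n : ℤ) * (a ^ m * b) * z ^ (m * n) := by
              rw [mul_assoc, mul_assoc, (hzx b (m*n)).eq]; group
          _ = b ^ (n : ℤ) * (b * (a ^ m * z ^ m)) * z ^ (m * n) := by rw [hstep]
          _ = b ^ ((n : ℤ) + 1) * (a ^ m * z ^ (m * ((n : ℤ) + 1))) := by
              rw [zpow_add_one, mul_add, mul_one, zpow_add]
              group
    | pred n ih =>
        have hstep : a ^ m * b⁻¹ = b⁻¹ * (a ^ m * z ^ (-m)) := by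
          have h2 : b⁻¹ * a ^ m = a ^ m * z ^ m * b⁻¹ := by rw [← hconj m]; group
          symm
          calc b⁻¹ * (a ^ m * z ^ (-m)) = (b⁻¹ * a ^ m) * z ^ (-m) := by rw [mul_assoc]
            _ = a ^ m * z ^ m * b⁻¹ * z ^ (-m) := by rw [h2]
            _ = a ^ m * z ^ m * (z ^ (-m) * b⁻¹) := by
                rw [mul_assoc, ← (hzx b⁻¹ (-m)).eq]
            _ = a ^ m * b⁻¹ := by group
        calc a ^ m * b ^ (-(n : ℤ) - 1) = (a ^ m * b ^ (-(n : ℤ))) * b⁻¹ := by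
              rw [zpow_sub_one, mul_assoc]
          _ = b ^ (-(n : ℤ)) * (a ^ m * z ^ (m * (-n))) * b⁻¹ := by rw [ih]
          _ = b ^ (-(n : ℤ)) * (a ^ m * b⁻¹) * z ^ (m * (-n)) := by
              rw [mul_assoc, mul_assoc, (hzx b⁻¹ (m*(-n))).eq]; group
          _ = b ^ (-(n : ℤ)) * (b⁻¹ * (a ^ m * z ^ (-m))) * z ^ (m * (-n)) := by rw [hstep]
          _ = b ^ (-(n : ℤ) - 1) * (a ^ m * z ^ (m * (-(n : ℤ) - 1))) := by
              rw [zpow_sub_one, mul_sub, mul_one, zpow_sub]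
              group
  -- expansion of binomials
  have e1 : (a ^ (-β) * c₁) ^ ε₁ = a ^ (-(β * ε₁)) * c₁ ^ ε₁ := by
    rw [(show Commute (a ^ (-β)) c₁ from (show Commute c₁ (a ^ (-β)) from hc₁z _).symm).mul_zpow,
      ← zpow_mul, neg_mul]
  have e2 : (b⁻¹ * c₂) ^ ε₂ = b ^ (-ε₂) * c₂ ^ ε₂ := by
    rw [(show Commute b⁻¹ c₂ from (show Commute c₂ b⁻¹ from hc₂z _).symm).mul_zpow,
      inv_zpow, ← zpow_neg]
  have e3 : (a ^ β * c₁⁻¹) ^ ε₃ = a ^ (β * ε₃) * c₁ ^ (-ε₃) := by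
    rw [(show Commute (a ^ β) c₁⁻¹ from ((show Commute c₁ (a ^ β) from hc₁z _).inv_left).symm).mul_zpow,
      ← zpow_mul, inv_zpow, ← zpow_neg]
  have e4 : (b * c₂⁻¹) ^ ε₄ = b ^ ε₄ * c₂ ^ (-ε₄) := by
    rw [(show Commute b c₂⁻¹ from ((show Commute c₂ b from hc₂z _).inv_left).symm).mul_zpow,
      inv_zpow, ← zpow_neg]
  -- move lemmas (bubble centrals rightward), with-tail versions
  have mc1a : ∀ (k m : ℤ) (t : G), c₁ ^ k * (a ^ m * t) = a ^ m * (c₁ ^ k * t) := by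
    intro k m t; rw [← mul_assoc, (hc1x _ k).eq, mul_assoc]
  have mc1b : ∀ (k m : ℤ) (t : G), c₁ ^ k * (b ^ m * t) = b ^ m * (c₁ ^ k * t) := by
    intro k m t; rw [← mul_assoc, (hc1x _ k).eq, mul_assoc]
  have mc2a : ∀ (k m : ℤ) (t : G), c₂ ^ k * (a ^ m * t) = a ^ m * (c₂ ^ k * t) := by
    intro k m t; rw [← mul_assoc, (hc2x _ k).eq, mul_assoc]
  have mc2b : ∀ (k m : ℤ) (t : G), c₂ ^ k * (b ^ m * t) = b ^ m * (c₂ ^ k * t) := by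
    intro k m t; rw [← mul_assoc, (hc2x _ k).eq, mul_assoc]
  have mc2c1 : ∀ (k j : ℤ) (t : G), c₂ ^ k * (c₁ ^ j * t) = c₁ ^ j * (c₂ ^ k * t) := by
    intro k j t; rw [← mul_assoc, (hc2x _ k).eq, mul_assoc]
  have mza : ∀ (k m : ℤ) (t : G), z ^ k * (a ^ m * t) = a ^ m * (z ^ k * t) := by
    intro k m t; rw [← mul_assoc, (hzx _ k).eq, mul_assoc]
  have mzb : ∀ (k m : ℤ) (t : G), z ^ k * (b ^ m * t) = b ^ m * (z ^ k * t) := by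
    intro k m t; rw [← mul_assoc, (hzx _ k).eq, mul_assoc]
  have mzc1 : ∀ (k j : ℤ) (t : G), z ^ k * (c₁ ^ j * t) = c₁ ^ j * (z ^ k * t) := by
    intro k j t; rw [← mul_assoc, (hzx _ k).eq, mul_assoc]
  have mzc2 : ∀ (k j : ℤ) (t : G), z ^ k * (c₂ ^ j * t) = c₂ ^ j * (z ^ k * t) := by
    intro k j t; rw [← mul_assoc, (hzx _ k).eq, mul_assoc]
  -- tail versions
  have mc1a' : ∀ (k m : ℤ), c₁ ^ k * a ^ m = a ^ m * c₁ ^ k := fun k m => (hc1x _ k).eq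
  have mc1b' : ∀ (k m : ℤ), c₁ ^ k * b ^ m = b ^ m * c₁ ^ k := fun k m => (hc1x _ k).eq
  have mc2a' : ∀ (k m : ℤ), c₂ ^ k * a ^ m = a ^ m * c₂ ^ k := fun k m => (hc2x _ k).eq
  have mc2b' : ∀ (k m : ℤ), c₂ ^ k * b ^ m = b ^ m * c₂ ^ k := fun k m => (hc2x _ k).eq
  have mc2c1' : ∀ (k j : ℤ), c₂ ^ k * c₁ ^ j = c₁ ^ j * c₂ ^ k := fun k j => (hc2x _ k).eq
  have mza' : ∀ (k m : ℤ), z ^ k * a ^ m = a ^ m * z ^ k := fun k m => (hzx _ k).eq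
  have mzb' : ∀ (k m : ℤ), z ^ k * b ^ m = b ^ m * z ^ k := fun k m => (hzx _ k).eq
  have mzc1' : ∀ (k j : ℤ), z ^ k * c₁ ^ j = c₁ ^ j * z ^ k := fun k j => (hzx _ k).eq
  have mzc2' : ∀ (k j : ℤ), z ^ k * c₂ ^ j = c₂ ^ j * z ^ k := fun k j => (hzx _ k).eq
  -- combining lemmas
  have cba : ∀ (j k : ℤ) (t : G), a ^ j * (a ^ k * t) = a ^ (j + k) * t := by
    intro j k t; rw [← mul_assoc, ← zpow_add]
  have cbb : ∀ (j k : ℤ) (t : G), b ^ j * (b ^ k * t) = b ^ (j + k) * t := by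
    intro j k t; rw [← mul_assoc, ← zpow_add]
  have cbc1 : ∀ (j k : ℤ) (t : G), c₁ ^ j * (c₁ ^ k * t) = c₁ ^ (j + k) * t := by
    intro j k t; rw [← mul_assoc, ← zpow_add]
  have cbc2 : ∀ (j k : ℤ) (t : G), c₂ ^ j * (c₂ ^ k * t) = c₂ ^ (j + k) * t := by
    intro j k t; rw [← mul_assoc, ← zpow_add]
  have cbz : ∀ (j k : ℤ) (t : G), z ^ j * (z ^ k * t) = z ^ (j + k) * t := by
    intro j k t; rw [← mul_assoc, ← zpow_add]
  have cba' : ∀ (j k : ℤ), a ^ j * a ^ k = a ^ (j + k) := fun j k => (zpow_add a j k).symm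
  have cbb' : ∀ (j k : ℤ), b ^ j * b ^ k = b ^ (j + k) := fun j k => (zpow_add b j k).symm
  have cbc1' : ∀ (j k : ℤ), c₁ ^ j * c₁ ^ k = c₁ ^ (j + k) := fun j k => (zpow_add c₁ j k).symm
  have cbc2' : ∀ (j k : ℤ), c₂ ^ j * c₂ ^ k = c₂ ^ (j + k) := fun j k => (zpow_add c₂ j k).symm
  have cbz' : ∀ (j k : ℤ), z ^ j * z ^ k = z ^ (j + k) := fun j k => (zpow_add z j k).symm
  -- the swap lemma
  have msw' : ∀ (m n : ℤ), b ^ n * a ^ m = a ^ m * (b ^ n * z ^ (-(m * n))) := by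
    intro m n
    calc b ^ n * a ^ m = b ^ n * (a ^ m * z ^ (m * n)) * z ^ (-(m * n)) := by group
      _ = a ^ m * b ^ n * z ^ (-(m * n)) := by rw [← hkey]
      _ = a ^ m * (b ^ n * z ^ (-(m * n))) := by rw [mul_assoc]
  have msw : ∀ (m n : ℤ) (t : G), b ^ n * (a ^ m * t) = a ^ m * (b ^ n * (z ^ (-(m * n)) * t)) := by
    intro m n t
    rw [← mul_assoc, msw', mul_assoc, mul_assoc]
  rw [e1, e2, e3, e4]
  simp only [mul_assoc]
  simp only [mc1a, mc1b, mc2a, mc2b, mc2c1, mza, mzb, mzc1, mzc2,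
    mc1a', mc1b', mc2a', mc2b', mc2c1', mza', mzb', mzc1', mzc2',
    msw, msw', cba, cbb, cbc1, cbc2, cbz, cba', cbb', cbc1', cbc2', cbz']
  constructor
  · -- forward direction
    set M : ℤ := -(β * ε₁) + β * ε₃ with hMdef
    set N : ℤ := -ε₂ + ε₄ with hNdef
    set u : ℤ := ε₁ + -ε₃ with hudef
    set v : ℤ := ε₂ + -ε₄ with hvdef
    set K : ℤ := -(β * ε₃ * -ε₂) with hKdef
    set W : ℤ := β * (ε₁ * ε₂) with hWdef
    intro h
    have hg : a ^ M * b ^ N = z ^ W * (z ^ (-K) * (c₂ ^ (-v) * c₁ ^ (-u))) := by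
      rw [← h]; group
    have hgc : ∀ x : G, (a ^ M * b ^ N) * x = x * (a ^ M * b ^ N) := by
      intro x; rw [hg]
      exact ((hzx x W).mul_left ((hzx x (-K)).mul_left
        ((hc2x x (-v)).mul_left (hc1x x (-u))))).eq
    -- conjugate by b : gives z^M = 1
    have h6 := hgc (b ^ (1 : ℤ))
    simp only [mul_assoc] at h6
    simp only [msw, msw', mzb, mzb', cbb, cbb', cba, cba', cbz, cbz'] at h6
    rw [show (1 : ℤ) + N = N + 1 from add_comm 1 N, ← mul_assoc] at h6
    have h7 : z ^ M = 1 := by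
      have := left_eq_mul.mp h6
      simpa using this
    have h9 := hbasis (a₁ := (M, 0, 0)) (a₂ := ((0 : ℤ), (0 : ℤ), (0 : ℤ)))
      (by simp [h7])
    have hM0 : M = 0 := by have := (Prod.ext_iff.mp h9).1; omega
    -- conjugate by a : gives z^N = 1
    have h6a := hgc (a ^ (1 : ℤ))
    rw [hM0, zpow_zero, one_mul] at h6a
    simp only [msw, msw', mza, mza', cba, cba', cbz, cbz'] at h6a
    rw [← mul_assoc] at h6a
    have h7a : z ^ N = 1 := by
      have := left_eq_mul.mp h6a.symm
      simpa using this
    have h9a := hbasis (a₁ := (N, 0, 0)) (a₂ := ((0 : ℤ), (0 : ℤ), (0 : ℤ)))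
      (by simp [h7a])
    have hN0 : N = 0 := by have := (Prod.ext_iff.mp h9a).1; omega
    -- conclude
    rw [hM0, hN0, zpow_zero, one_mul, zpow_zero, one_mul] at h
    have h10 : z ^ K * c₁ ^ u * c₂ ^ v = z ^ W * c₁ ^ (0:ℤ) * c₂ ^ (0:ℤ) := by
      simp only [zpow_zero, mul_one]
      rw [← h, mzc1', mul_assoc, mzc2']
    have h11 := hbasis (a₁ := (K, u, v)) (a₂ := (W, (0 : ℤ), (0 : ℤ))) h10
    have hu0 : u = 0 := (Prod.ext_iff.mp (Prod.ext_iff.mp h11).2).1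
    constructor
    · omega
    · omega
  · rintro ⟨rfl, rfl⟩
    rw [show -(β * ε₁) + β * ε₁ = 0 by ring, show -ε₂ + ε₂ = 0 by ring,
      show ε₁ + -ε₁ = 0 by ring, show ε₂ + -ε₂ = 0 by ring,
      show -(β * ε₁ * -ε₂) = β * (ε₁ * ε₂) by ring]
    simp
end

section
/- The free nilpotent group of class 2 of rank n embeds into the group UT_{2n+1}(ℤ) of (2n+1)×(2n+1) upper unitriangular integer matrices. -/
/-- The free nilpotent group of class 2 of rank `n`. -/
def FreeNilpotent2 (n : ℕ) : Type :=
  FreeGroup (Fin n) ⧸ (⊤ : Subgroup (FreeGroup (Fin n))).lowerCentralSeries 2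

noncomputable instance (n : ℕ) : Group (FreeNilpotent2 n) :=
  inferInstanceAs (Group (FreeGroup (Fin n) ⧸ (⊤ : Subgroup (FreeGroup (Fin n))).lowerCentralSeries 2))

/-- A square matrix is upper unitriangular if it has `1`'s on the diagonal and
`0`'s below it. -/
def IsUnitriangular {m : ℕ} (M : Matrix (Fin m) (Fin m) ℤ) : Prop :=
  (∀ i, M i i = 1) ∧ ∀ i j, j < i → M i j = 0

open scoped commutatorElement
open scoped IsMulCommutative

/- ----------------------------------------------------------------
  Auxiliary material for the proof.
---------------------------------------------------------------- -/

namespace FN2Aux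

/-- Concrete 2-step nilpotent group: pairs `(a, C)` with twisted multiplication. -/
@[ext] structure Hg (n : ℕ) where
  a : Fin n → ℤ
  c : Fin n → Fin n → ℤ

namespace Hg

variable {n : ℕ}

instance : Mul (Hg n) := ⟨fun g h => ⟨g.a + h.a, g.c + h.c + fun i j => g.a i * h.a j⟩⟩
instance : One (Hg n) := ⟨⟨0, 0⟩⟩
instance : Inv (Hg n) := ⟨fun g => ⟨-g.a, -g.c + fun i j => g.a i * g.a j⟩⟩

@[simp] lemma mul_a (g h : Hg n) : (g * h).a = g.a + h.a := rfl
@[simp] lemma mul_c (g h : Hg n) : (g * h).c = g.c + h.c + fun i j => g.a i * h.a j := rfl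
@[simp] lemma one_a : (1 : Hg n).a = 0 := rfl
@[simp] lemma one_c : (1 : Hg n).c = 0 := rfl
@[simp] lemma inv_a (g : Hg n) : (g⁻¹).a = -g.a := rfl
@[simp] lemma inv_c (g : Hg n) : (g⁻¹).c = -g.c + fun i j => g.a i * g.a j := rfl

instance : Group (Hg n) where
  mul_assoc g h k := by ext i j <;> simp <;> ring
  one_mul g := by ext i j <;> simp
  mul_one g := by ext i j <;> simp
  inv_mul_cancel g := by ext i j <;> simp

/-- Elements with vanishing first component are central. -/
lemma central_of_a_eq_zero {z : Hg n} (hz : z.a = 0) (g : Hg n) : g * z = z * g := by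
  ext i j <;> simp [hz]
  ring

lemma commutator_a (g h : Hg n) : (⁅g, h⁆).a = 0 := by
  simp [commutatorElement_def]

lemma commutator_central (g h k : Hg n) : Commute ⁅g, h⁆ k :=
  (central_of_a_eq_zero (commutator_a g h) k).symm

lemma commutator_c (g h : Hg n) :
    (⁅g, h⁆).c = fun i j => g.a i * h.a j - h.a i * g.a j := by
  funext i j
  simp [commutatorElement_def]
  ring

end Hg

/- Matrix part -/

open Matrix

variable {n : ℕ}

def lIdx (k : Fin n) : Fin (2*n+1) := ⟨k.1, by omega⟩
def nIdx (n : ℕ) : Fin (2*n+1) := ⟨n, by omega⟩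
def rIdx (k : Fin n) : Fin (2*n+1) := ⟨n+1+k.1, by omega⟩

lemma nIdx_ne_lIdx (k : Fin n) : nIdx n ≠ lIdx k := by
  have := k.2; simp [nIdx, lIdx, Fin.ext_iff]; omega

lemma rIdx_ne_lIdx (k j : Fin n) : rIdx k ≠ lIdx j := by
  have := j.2; simp [rIdx, lIdx, Fin.ext_iff]; omega

lemma rIdx_ne_nIdx (k : Fin n) : rIdx k ≠ nIdx n := by
  simp [rIdx, nIdx, Fin.ext_iff]; omega

lemma lIdx_inj {k j : Fin n} (h : lIdx k = lIdx j) : k = j := by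
  simpa [lIdx, Fin.ext_iff] using h

lemma rIdx_inj {k j : Fin n} (h : rIdx k = rIdx j) : k = j := by
  simpa [rIdx, Fin.ext_iff] using h

lemma lIdx_lt_nIdx (k : Fin n) : (lIdx k : ℕ) < (nIdx n : ℕ) := k.2

lemma nIdx_lt_rIdx (k : Fin n) : (nIdx n : ℕ) < (rIdx k : ℕ) := by
  simp [nIdx, rIdx]; omega

lemma lIdx_lt_rIdx (i j : Fin n) : (lIdx i : ℕ) < (rIdx j : ℕ) := by
  have := i.2; simp [lIdx, rIdx]; omega

def matX (v : Fin n → ℤ) : Matrix (Fin (2*n+1)) (Fin (2*n+1)) ℤ :=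
  ∑ k, Matrix.single (lIdx k) (nIdx n) (v k)

def matY (v : Fin n → ℤ) : Matrix (Fin (2*n+1)) (Fin (2*n+1)) ℤ :=
  ∑ k, Matrix.single (nIdx n) (rIdx k) (v k)

def matZ (C : Fin n → Fin n → ℤ) : Matrix (Fin (2*n+1)) (Fin (2*n+1)) ℤ :=
  ∑ i, ∑ j, Matrix.single (lIdx i) (rIdx j) (C i j)

lemma matX_mul_matX (v w : Fin n → ℤ) : matX v * matX w = 0 := by
  unfold matX
  rw [Finset.sum_mul]
  refine Finset.sum_eq_zero fun k _ => ?_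
  rw [Finset.mul_sum]
  refine Finset.sum_eq_zero fun j _ => ?_
  exact Matrix.single_mul_single_of_ne (h := (nIdx_ne_lIdx j)) ..

lemma matX_mul_matZ (v : Fin n → ℤ) (C : Fin n → Fin n → ℤ) : matX v * matZ C = 0 := by
  unfold matX matZ
  rw [Finset.sum_mul]
  refine Finset.sum_eq_zero fun k _ => ?_
  rw [Finset.mul_sum]
  refine Finset.sum_eq_zero fun i _ => ?_
  rw [Finset.mul_sum]
  refine Finset.sum_eq_zero fun j _ => ?_
  exact Matrix.single_mul_single_of_ne (h := (nIdx_ne_lIdx i)) ..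

lemma matY_mul_matX (v w : Fin n → ℤ) : matY v * matX w = 0 := by
  unfold matX matY
  rw [Finset.sum_mul]
  refine Finset.sum_eq_zero fun k _ => ?_
  rw [Finset.mul_sum]
  refine Finset.sum_eq_zero fun j _ => ?_
  exact Matrix.single_mul_single_of_ne (h := (rIdx_ne_lIdx k j)) ..

lemma matY_mul_matY (v w : Fin n → ℤ) : matY v * matY w = 0 := by
  unfold matY
  rw [Finset.sum_mul]
  refine Finset.sum_eq_zero fun k _ => ?_
  rw [Finset.mul_sum]
  refine Finset.sum_eq_zero fun j _ => ?_
  exact Matrix.single_mul_single_of_ne (h := (rIdx_ne_nIdx k)) ..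

lemma matY_mul_matZ (v : Fin n → ℤ) (C : Fin n → Fin n → ℤ) : matY v * matZ C = 0 := by
  unfold matY matZ
  rw [Finset.sum_mul]
  refine Finset.sum_eq_zero fun k _ => ?_
  rw [Finset.mul_sum]
  refine Finset.sum_eq_zero fun i _ => ?_
  rw [Finset.mul_sum]
  refine Finset.sum_eq_zero fun j _ => ?_
  exact Matrix.single_mul_single_of_ne (h := (rIdx_ne_lIdx k i)) ..

lemma matZ_mul_matX (C : Fin n → Fin n → ℤ) (v : Fin n → ℤ) : matZ C * matX v = 0 := by
  unfold matX matZ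
  rw [Finset.sum_mul]
  refine Finset.sum_eq_zero fun i _ => ?_
  rw [Finset.sum_mul]
  refine Finset.sum_eq_zero fun j _ => ?_
  rw [Finset.mul_sum]
  refine Finset.sum_eq_zero fun k _ => ?_
  exact Matrix.single_mul_single_of_ne (h := (rIdx_ne_lIdx j k)) ..

lemma matZ_mul_matY (C : Fin n → Fin n → ℤ) (v : Fin n → ℤ) : matZ C * matY v = 0 := by
  unfold matY matZ
  rw [Finset.sum_mul]
  refine Finset.sum_eq_zero fun i _ => ?_
  rw [Finset.sum_mul]
  refine Finset.sum_eq_zero fun j _ => ?_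
  rw [Finset.mul_sum]
  refine Finset.sum_eq_zero fun k _ => ?_
  exact Matrix.single_mul_single_of_ne (h := (rIdx_ne_nIdx j)) ..

lemma matZ_mul_matZ (C D : Fin n → Fin n → ℤ) : matZ C * matZ D = 0 := by
  unfold matZ
  rw [Finset.sum_mul]
  refine Finset.sum_eq_zero fun i _ => ?_
  rw [Finset.sum_mul]
  refine Finset.sum_eq_zero fun j _ => ?_
  rw [Finset.mul_sum]
  refine Finset.sum_eq_zero fun k _ => ?_
  rw [Finset.mul_sum]
  refine Finset.sum_eq_zero fun l _ => ?_
  exact Matrix.single_mul_single_of_ne (h := (rIdx_ne_lIdx j k)) ..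

lemma matX_mul_matY (v w : Fin n → ℤ) :
    matX v * matY w = matZ (fun i j => v i * w j) := by
  unfold matX matY matZ
  rw [Finset.sum_mul]
  refine Finset.sum_congr rfl fun k _ => ?_
  rw [Finset.mul_sum]
  refine Finset.sum_congr rfl fun j _ => ?_
  exact Matrix.single_mul_single_same _ _ _ _ _

lemma matX_add (v w : Fin n → ℤ) : matX (v + w) = matX v + matX w := by
  unfold matX
  rw [← Finset.sum_add_distrib]
  exact Finset.sum_congr rfl fun k _ => by simp [Matrix.single_add]

lemma matY_add (v w : Fin n → ℤ) : matY (v + w) = matY v + matY w := by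
  unfold matY
  rw [← Finset.sum_add_distrib]
  exact Finset.sum_congr rfl fun k _ => by simp [Matrix.single_add]

lemma matZ_add (C D : Fin n → Fin n → ℤ) : matZ (C + D) = matZ C + matZ D := by
  unfold matZ
  rw [← Finset.sum_add_distrib]
  refine Finset.sum_congr rfl fun i _ => ?_
  rw [← Finset.sum_add_distrib]
  exact Finset.sum_congr rfl fun j _ => by simp [Matrix.single_add]

lemma matX_zero : matX (0 : Fin n → ℤ) = 0 := by unfold matX; simp

lemma matY_zero : matY (0 : Fin n → ℤ) = 0 := by unfold matY; simp

lemma matZ_zero : matZ (0 : Fin n → Fin n → ℤ) = 0 := by unfold matZ; simp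

/-- The matrix realization of elements of `Hg n`. -/
def matM : Hg n →* Matrix (Fin (2*n+1)) (Fin (2*n+1)) ℤ where
  toFun g := 1 + matX g.a + matY g.a + matZ g.c
  map_one' := by simp [matX_zero, matY_zero, matZ_zero]
  map_mul' g h := by
    have expand :
        (1 + matX g.a + matY g.a + matZ g.c) * (1 + matX h.a + matY h.a + matZ h.c)
          = 1 + matX g.a + matY g.a + matZ g.c + matX h.a + matY h.a + matZ h.c
              + matZ (fun i j => g.a i * h.a j) := by
      simp only [mul_add, add_mul, one_mul, mul_one,
        matX_mul_matX, matX_mul_matZ, matY_mul_matX, matY_mul_matY, matY_mul_matZ,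
        matZ_mul_matX, matZ_mul_matY, matZ_mul_matZ, matX_mul_matY,
        add_zero, zero_add]
      abel
    show 1 + matX (g * h).a + matY (g * h).a + matZ (g * h).c
        = (1 + matX g.a + matY g.a + matZ g.c) * (1 + matX h.a + matY h.a + matZ h.c)
    have hc : (g * h).c = g.c + h.c + fun i j => g.a i * h.a j := rfl
    have ha : (g * h).a = g.a + h.a := rfl
    rw [ha, hc, matX_add, matY_add, matZ_add, matZ_add, expand]
    abel

lemma std_apply_zero_of_not_lt {c : ℤ} {i j p q : Fin (2*n+1)}
    (hij : (i : ℕ) < j) (h : ¬ (p : ℕ) < q) : Matrix.single i j c p q = 0 := by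
  refine Matrix.single_apply_of_ne _ _ _ _ _ ?_
  rintro ⟨rfl, rfl⟩
  exact h hij

lemma matM_diag (g : Hg n) (p : Fin (2*n+1)) : matM g p p = 1 := by
  show (1 + matX g.a + matY g.a + matZ g.c) p p = 1
  have hx : matX g.a p p = 0 := by
    unfold matX
    rw [Matrix.sum_apply]
    exact Finset.sum_eq_zero fun k _ =>
      std_apply_zero_of_not_lt (lIdx_lt_nIdx k) (lt_irrefl _)
  have hy : matY g.a p p = 0 := by
    unfold matY
    rw [Matrix.sum_apply]
    exact Finset.sum_eq_zero fun k _ =>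
      std_apply_zero_of_not_lt (nIdx_lt_rIdx k) (lt_irrefl _)
  have hz : matZ g.c p p = 0 := by
    unfold matZ
    rw [Matrix.sum_apply]
    refine Finset.sum_eq_zero fun i _ => ?_
    rw [Matrix.sum_apply]
    exact Finset.sum_eq_zero fun j _ =>
      std_apply_zero_of_not_lt (lIdx_lt_rIdx i j) (lt_irrefl _)
  simp [Matrix.add_apply, hx, hy, hz, Matrix.one_apply]

lemma matM_lower (g : Hg n) {p q : Fin (2*n+1)} (h : q < p) : matM g p q = 0 := by
  have h' : ¬ (p : ℕ) < q := by omega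
  show (1 + matX g.a + matY g.a + matZ g.c) p q = 0
  have hx : matX g.a p q = 0 := by
    unfold matX
    rw [Matrix.sum_apply]
    exact Finset.sum_eq_zero fun k _ =>
      std_apply_zero_of_not_lt (lIdx_lt_nIdx k) h'
  have hy : matY g.a p q = 0 := by
    unfold matY
    rw [Matrix.sum_apply]
    exact Finset.sum_eq_zero fun k _ =>
      std_apply_zero_of_not_lt (nIdx_lt_rIdx k) h'
  have hz : matZ g.c p q = 0 := by
    unfold matZ
    rw [Matrix.sum_apply]
    refine Finset.sum_eq_zero fun i _ => ?_
    rw [Matrix.sum_apply]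
    exact Finset.sum_eq_zero fun j _ =>
      std_apply_zero_of_not_lt (lIdx_lt_rIdx i j) h'
  have hpq : p ≠ q := (ne_of_lt h).symm
  simp [Matrix.add_apply, hx, hy, hz, Matrix.one_apply_ne hpq]

lemma matM_entry_a (g : Hg n) (k : Fin n) : matM g (lIdx k) (nIdx n) = g.a k := by
  show (1 + matX g.a + matY g.a + matZ g.c) (lIdx k) (nIdx n) = g.a k
  have hx : matX g.a (lIdx k) (nIdx n) = g.a k := by
    unfold matX
    rw [Matrix.sum_apply]
    rw [Finset.sum_eq_single k]
    · exact Matrix.single_apply_same _ _ _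
    · intro b _ hb
      refine Matrix.single_apply_of_ne _ _ _ _ _ ?_
      rintro ⟨h1, -⟩
      exact hb (lIdx_inj h1)
    · intro hk; exact absurd (Finset.mem_univ k) hk
  have hy : matY g.a (lIdx k) (nIdx n) = 0 := by
    unfold matY
    rw [Matrix.sum_apply]
    refine Finset.sum_eq_zero fun j _ => ?_
    refine Matrix.single_apply_of_ne _ _ _ _ _ ?_
    rintro ⟨h1, -⟩
    exact nIdx_ne_lIdx k h1
  have hz : matZ g.c (lIdx k) (nIdx n) = 0 := by
    unfold matZ
    rw [Matrix.sum_apply]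
    refine Finset.sum_eq_zero fun i _ => ?_
    rw [Matrix.sum_apply]
    refine Finset.sum_eq_zero fun j _ => ?_
    refine Matrix.single_apply_of_ne _ _ _ _ _ ?_
    rintro ⟨-, h2⟩
    exact rIdx_ne_nIdx j h2
  have h1 : (1 : Matrix (Fin (2*n+1)) (Fin (2*n+1)) ℤ) (lIdx k) (nIdx n) = 0 :=
    Matrix.one_apply_ne (Ne.symm (nIdx_ne_lIdx k))
  simp [Matrix.add_apply, hx, hy, hz, h1]

lemma matM_entry_c (g : Hg n) (i j : Fin n) : matM g (lIdx i) (rIdx j) = g.c i j := by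
  show (1 + matX g.a + matY g.a + matZ g.c) (lIdx i) (rIdx j) = g.c i j
  have hx : matX g.a (lIdx i) (rIdx j) = 0 := by
    unfold matX
    rw [Matrix.sum_apply]
    refine Finset.sum_eq_zero fun k _ => ?_
    refine Matrix.single_apply_of_ne _ _ _ _ _ ?_
    rintro ⟨-, h2⟩
    exact rIdx_ne_nIdx j h2.symm
  have hy : matY g.a (lIdx i) (rIdx j) = 0 := by
    unfold matY
    rw [Matrix.sum_apply]
    refine Finset.sum_eq_zero fun k _ => ?_
    refine Matrix.single_apply_of_ne _ _ _ _ _ ?_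
    rintro ⟨h1, -⟩
    exact nIdx_ne_lIdx i h1
  have hz : matZ g.c (lIdx i) (rIdx j) = g.c i j := by
    unfold matZ
    rw [Matrix.sum_apply]
    rw [Finset.sum_eq_single i]
    · rw [Matrix.sum_apply]
      rw [Finset.sum_eq_single j]
      · exact Matrix.single_apply_same _ _ _
      · intro b _ hb
        refine Matrix.single_apply_of_ne _ _ _ _ _ ?_
        rintro ⟨-, h2⟩
        exact hb (rIdx_inj h2)
      · intro hj; exact absurd (Finset.mem_univ j) hj
    · intro b _ hb
      rw [Matrix.sum_apply]
      refine Finset.sum_eq_zero fun l _ => ?_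
      refine Matrix.single_apply_of_ne _ _ _ _ _ ?_
      rintro ⟨h1, -⟩
      exact hb (lIdx_inj h1)
    · intro hi; exact absurd (Finset.mem_univ i) hi
  have h1 : (1 : Matrix (Fin (2*n+1)) (Fin (2*n+1)) ℤ) (lIdx i) (rIdx j) = 0 :=
    Matrix.one_apply_ne (Ne.symm (rIdx_ne_lIdx j i))
  simp [Matrix.add_apply, hx, hy, hz, h1]

lemma matM_injective : Function.Injective (matM (n := n)) := by
  intro g h e
  have ha : g.a = h.a := funext fun k => by
    have := congrArg (fun M => M (lIdx k) (nIdx n)) e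
    simpa [matM_entry_a] using this
  have hc : g.c = h.c := funext fun i => funext fun j => by
    have := congrArg (fun M => M (lIdx i) (rIdx j)) e
    simpa [matM_entry_c] using this
  exact Hg.ext ha hc

/-- The unit version of `matM`. -/
def matU : Hg n →* (Matrix (Fin (2*n+1)) (Fin (2*n+1)) ℤ)ˣ where
  toFun g :=
    ⟨matM g, matM g⁻¹,
      by rw [← _root_.map_mul, mul_inv_cancel, _root_.map_one],
      by rw [← _root_.map_mul, inv_mul_cancel, _root_.map_one]⟩
  map_one' := by ext; simp
  map_mul' g h := by ext; simp

@[simp] lemma matU_val (g : Hg n) : ((matU g : (Matrix (Fin (2*n+1)) (Fin (2*n+1)) ℤ)ˣ) :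
    Matrix (Fin (2*n+1)) (Fin (2*n+1)) ℤ) = matM g := rfl

end FN2Aux

namespace FN2Aux

open Subgroup

variable {n : ℕ}

/-- Generators inside `Hg`. -/
def gen (k : Fin n) : Hg n := ⟨Pi.single k 1, 0⟩

@[simp] lemma gen_a (k : Fin n) : (gen k).a = Pi.single k 1 := rfl

def flift : FreeGroup (Fin n) →* Hg n := FreeGroup.lift gen

def fstHom : Hg n →* Multiplicative (Fin n → ℤ) where
  toFun g := Multiplicative.ofAdd g.a
  map_one' := rfl
  map_mul' _ _ := rfl

lemma lcs2_eq (G : Type*) [Group G] :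
    (⊤ : Subgroup G).lowerCentralSeries 2 = ⁅(⁅(⊤ : Subgroup G), ⊤⁆ : Subgroup G), ⊤⁆ := by
  have h1 : (⊤ : Subgroup G).lowerCentralSeries 1 = ⁅(⊤ : Subgroup G), ⊤⁆ := by
    rw [top_lowerCentralSeries_one, _root_.commutator_def]
  have h2 : (⊤ : Subgroup G).lowerCentralSeries 2 = ⁅(⊤ : Subgroup G).lowerCentralSeries 1, ⊤⁆ := rfl
  rw [h2, h1]

lemma flift_a_eq_zero_of_mem_commutator {x : FreeGroup (Fin n)}
    (hx : x ∈ commutator (FreeGroup (Fin n))) : (flift x).a = 0 := by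
  have h := Abelianization.commutator_subset_ker
    ((fstHom (n := n)).comp flift) hx
  rw [MonoidHom.mem_ker] at h
  have h2 : Multiplicative.ofAdd (flift x).a = Multiplicative.ofAdd (0 : Fin n → ℤ) := h
  exact Multiplicative.ofAdd.injective h2

lemma flift_ker : (⊤ : Subgroup (FreeGroup (Fin n))).lowerCentralSeries 2 ≤ (flift (n := n)).ker := by
  rw [lcs2_eq, Subgroup.commutator_le]
  intro x hx y _
  rw [MonoidHom.mem_ker, map_commutatorElement, commutatorElement_eq_one_iff_commute]
  have hxa : (flift x).a = 0 :=
    flift_a_eq_zero_of_mem_commutator (by rwa [commutator_def])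
  exact (Hg.central_of_a_eq_zero hxa (flift y)).symm

variable (n)

noncomputable def pr : FreeGroup (Fin n) →* FreeNilpotent2 n :=
  QuotientGroup.mk' ((⊤ : Subgroup (FreeGroup (Fin n))).lowerCentralSeries 2)

noncomputable def psi : FreeNilpotent2 n →* Hg n :=
  QuotientGroup.lift ((⊤ : Subgroup (FreeGroup (Fin n))).lowerCentralSeries 2) flift flift_ker

noncomputable def yy (k : Fin n) : FreeNilpotent2 n := pr n (FreeGroup.of k)

lemma psi_pr (x : FreeGroup (Fin n)) : psi n (pr n x) = flift x := rfl

lemma psi_yy (k : Fin n) : psi n (yy n k) = gen k := by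
  rw [yy, psi_pr]
  exact FreeGroup.lift_apply_of

lemma pr_surj : Function.Surjective (pr n) :=
  QuotientGroup.mk'_surjective _

lemma htop : Subgroup.closure (Set.range (yy n)) = ⊤ := by
  have h : Set.range (yy n) = (pr n) '' (Set.range FreeGroup.of) := by
    rw [← Set.range_comp]; rfl
  rw [h, ← MonoidHom.map_closure, FreeGroup.closure_range_of,
    Subgroup.map_top_of_surjective _ (pr_surj n)]

lemma comm_central (a b g : FreeNilpotent2 n) : Commute ⁅a, b⁆ g := by
  obtain ⟨a', rfl⟩ := pr_surj n a
  obtain ⟨b', rfl⟩ := pr_surj n b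
  obtain ⟨g', rfl⟩ := pr_surj n g
  apply commutatorElement_eq_one_iff_commute.mp
  have hmem : ⁅⁅a', b'⁆, g'⁆ ∈ (⊤ : Subgroup (FreeGroup (Fin n))).lowerCentralSeries 2 := by
    rw [lcs2_eq]
    exact Subgroup.commutator_mem_commutator
      (Subgroup.commutator_mem_commutator (Subgroup.mem_top _) (Subgroup.mem_top _))
      (Subgroup.mem_top _)
  have h1 : pr n ⁅⁅a', b'⁆, g'⁆ = 1 := (QuotientGroup.eq_one_iff _).mpr hmem
  calc ⁅⁅pr n a', pr n b'⁆, pr n g'⁆ = pr n ⁅⁅a', b'⁆, g'⁆ := by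
        rw [map_commutatorElement, map_commutatorElement]
    _ = 1 := h1

lemma comm_mul_left (a b c : FreeNilpotent2 n) : ⁅a * b, c⁆ = ⁅a, c⁆ * ⁅b, c⁆ := by
  have h : ⁅a * b, c⁆ = a * ⁅b, c⁆ * a⁻¹ * ⁅a, c⁆ := by
    simp only [commutatorElement_def]; group
  have h2 : a * ⁅b, c⁆ * a⁻¹ = ⁅b, c⁆ := by
    rw [← (comm_central n b c a).eq]; group
  rw [h, h2]
  exact (comm_central n b c ⁅a, c⁆).eq

lemma comm_inv_left (a c : FreeNilpotent2 n) : ⁅a⁻¹, c⁆ = ⁅a, c⁆⁻¹ := by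
  have h : ⁅a⁻¹, c⁆ = a⁻¹ * ⁅a, c⁆⁻¹ * a := by
    simp only [commutatorElement_def]; group
  have h2 : a⁻¹ * ⁅a, c⁆⁻¹ * a = ⁅a, c⁆⁻¹ := by
    rw [mul_assoc, ((comm_central n a c a).inv_left).eq, ← mul_assoc,
      inv_mul_cancel, one_mul]
  rw [h, h2]

lemma comm_mul_right (a b c : FreeNilpotent2 n) : ⁅a, b * c⁆ = ⁅a, c⁆ * ⁅a, b⁆ := by
  calc ⁅a, b * c⁆ = ⁅b * c, a⁆⁻¹ := (commutatorElement_inv (b * c) a).symm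
    _ = (⁅b, a⁆ * ⁅c, a⁆)⁻¹ := by rw [comm_mul_left]
    _ = ⁅c, a⁆⁻¹ * ⁅b, a⁆⁻¹ := by rw [mul_inv_rev]
    _ = ⁅a, c⁆ * ⁅a, b⁆ := by rw [commutatorElement_inv, commutatorElement_inv]

lemma comm_inv_right (a b : FreeNilpotent2 n) : ⁅a, b⁻¹⁆ = ⁅a, b⁆⁻¹ := by
  calc ⁅a, b⁻¹⁆ = ⁅b⁻¹, a⁆⁻¹ := (commutatorElement_inv _ _).symm
    _ = (⁅b, a⁆⁻¹)⁻¹ := by rw [comm_inv_left]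
    _ = ⁅a, b⁆⁻¹ := by rw [commutatorElement_inv, commutatorElement_inv]

/-- Set of basic commutators. -/
def genC : Set (FreeNilpotent2 n) := {d | ∃ i j, d = ⁅yy n i, yy n j⁆}

lemma comm_mem_D (g1 g2 : FreeNilpotent2 n) :
    ⁅g1, g2⁆ ∈ Subgroup.closure (genC n) := by
  have hg1 : g1 ∈ Subgroup.closure (Set.range (yy n)) := by rw [htop]; trivial
  refine Subgroup.closure_induction
    (p := fun g _ => ∀ h : FreeNilpotent2 n, ⁅g, h⁆ ∈ Subgroup.closure (genC n))
    ?_ ?_ ?_ ?_ hg1 g2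
  · rintro x ⟨i, rfl⟩ h
    have hh : h ∈ Subgroup.closure (Set.range (yy n)) := by rw [htop]; trivial
    refine Subgroup.closure_induction
      (p := fun h _ => ⁅yy n i, h⁆ ∈ Subgroup.closure (genC n)) ?_ ?_ ?_ ?_ hh
    · rintro z ⟨j, rfl⟩
      exact Subgroup.subset_closure ⟨i, j, rfl⟩
    · show ⁅yy n i, (1 : FreeNilpotent2 n)⁆ ∈ Subgroup.closure (genC n)
      have h1 : ⁅yy n i, (1 : FreeNilpotent2 n)⁆ = 1 := by
        simp [commutatorElement_def]
      rw [h1]; exact one_mem _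
    · intro u v _ _ ihu ihv
      show ⁅yy n i, u * v⁆ ∈ Subgroup.closure (genC n)
      rw [comm_mul_right]
      exact mul_mem ihv ihu
    · intro u _ ihu
      show ⁅yy n i, u⁻¹⁆ ∈ Subgroup.closure (genC n)
      rw [comm_inv_right]
      exact inv_mem ihu
  · intro h
    show ⁅(1 : FreeNilpotent2 n), h⁆ ∈ Subgroup.closure (genC n)
    have h1 : ⁅(1 : FreeNilpotent2 n), h⁆ = 1 := by
      simp [commutatorElement_def]
    rw [h1]; exact one_mem _
  · intro u v _ _ ihu ihv h
    show ⁅u * v, h⁆ ∈ Subgroup.closure (genC n)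
    rw [comm_mul_left]
    exact mul_mem (ihu h) (ihv h)
  · intro u _ ihu h
    show ⁅u⁻¹, h⁆ ∈ Subgroup.closure (genC n)
    rw [comm_inv_left]
    exact inv_mem (ihu h)

lemma commutator_le_D :
    commutator (FreeNilpotent2 n) ≤ Subgroup.closure (genC n) := by
  rw [commutator_def, Subgroup.commutator_le]
  intro g1 _ g2 _
  exact comm_mem_D n g1 g2

lemma mem_commutator_of_psi_a_eq_zero {g : FreeNilpotent2 n}
    (h : (psi n g).a = 0) : g ∈ commutator (FreeNilpotent2 n) := by
  have key : ∀ g : FreeNilpotent2 n,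
      Abelianization.of g = ∏ k, (Abelianization.of (yy n k)) ^ ((psi n g).a k) := by
    intro g
    have hg : g ∈ Subgroup.closure (Set.range (yy n)) := by rw [htop]; trivial
    induction hg using Subgroup.closure_induction with
    | mem x hx =>
      obtain ⟨i, rfl⟩ := hx
      rw [psi_yy, gen_a]
      rw [Finset.prod_eq_single i]
      · rw [Pi.single_eq_same, zpow_one]
      · intro b _ hb
        rw [Pi.single_eq_of_ne hb, zpow_zero]
      · intro hi; exact absurd (Finset.mem_univ i) hi
    | one => simp
    | mul x z hx hz ihx ihz =>
      rw [map_mul, ihx, ihz, ← Finset.prod_mul_distrib]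
      refine Finset.prod_congr rfl fun k _ => ?_
      rw [map_mul, Hg.mul_a, Pi.add_apply, zpow_add]
    | inv x hx ihx =>
      rw [map_inv, ihx, ← Finset.prod_inv_distrib]
      refine Finset.prod_congr rfl fun k _ => ?_
      rw [map_inv, Hg.inv_a, Pi.neg_apply, zpow_neg]
  have h1 : Abelianization.of g = 1 := by
    rw [key g, h]
    simp
  exact (QuotientGroup.eq_one_iff g).mp h1

/-- The basic commutators as elements of the center. -/
noncomputable def cel (i j : Fin n) : Subgroup.center (FreeNilpotent2 n) :=
  ⟨⁅yy n i, yy n j⁆,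
    Subgroup.mem_center_iff.mpr fun g => ((comm_central n (yy n i) (yy n j) g).eq).symm⟩

@[simp] lemma cel_coe (i j : Fin n) :
    ((cel n i j : Subgroup.center (FreeNilpotent2 n)) : FreeNilpotent2 n)
      = ⁅yy n i, yy n j⁆ := rfl

noncomputable def sig (M : Fin n → Fin n → ℤ) : Subgroup.center (FreeNilpotent2 n) :=
  ∏ i, ∏ j, (cel n i j) ^ (if i < j then M i j else 0)

lemma sig_zero : sig n 0 = 1 := by
  unfold sig
  simp

lemma sig_add (M M' : Fin n → Fin n → ℤ) :
    sig n (M + M') = sig n M * sig n M' := by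
  unfold sig
  rw [← Finset.prod_mul_distrib]
  refine Finset.prod_congr rfl fun i _ => ?_
  rw [← Finset.prod_mul_distrib]
  refine Finset.prod_congr rfl fun j _ => ?_
  rw [← zpow_add]
  congr 1
  by_cases h : i < j <;> simp [h]

lemma sig_neg (M : Fin n → Fin n → ℤ) : sig n (-M) = (sig n M)⁻¹ := by
  unfold sig
  rw [← Finset.prod_inv_distrib]
  refine Finset.prod_congr rfl fun i _ => ?_
  rw [← Finset.prod_inv_distrib]
  refine Finset.prod_congr rfl fun j _ => ?_
  rw [← zpow_neg]
  congr 1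
  by_cases h : i < j <;> simp [h]

lemma sig_basis {i j : Fin n} (hij : i < j) :
    sig n (fun k l => (Pi.single i 1 : Fin n → ℤ) k * (Pi.single j 1 : Fin n → ℤ) l
      - (Pi.single j 1 : Fin n → ℤ) k * (Pi.single i 1 : Fin n → ℤ) l) = cel n i j := by
  have hij' : i ≠ j := ne_of_lt hij
  unfold sig
  rw [Finset.prod_eq_single i]
  · rw [Finset.prod_eq_single j]
    · rw [if_pos hij]
      have he : (fun k l => (Pi.single i 1 : Fin n → ℤ) k * (Pi.single j 1 : Fin n → ℤ) l
          - (Pi.single j 1 : Fin n → ℤ) k * (Pi.single i 1 : Fin n → ℤ) l) i j = 1 := by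
        simp [Pi.single_eq_of_ne hij', Pi.single_eq_of_ne hij'.symm]
      rw [he, zpow_one]
    · intro l _ hl
      have h0 : (if i < l then (Pi.single i 1 : Fin n → ℤ) i * (Pi.single j 1 : Fin n → ℤ) l
          - (Pi.single j 1 : Fin n → ℤ) i * (Pi.single i 1 : Fin n → ℤ) l else 0) = 0 := by
        rcases eq_or_ne l i with rfl | hli
        · simp
        · simp [Pi.single_eq_of_ne hl, Pi.single_eq_of_ne hli, Pi.single_eq_of_ne hij']
      rw [h0, zpow_zero]
    · intro hj; exact absurd (Finset.mem_univ j) hj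
  · intro k _ hk
    refine Finset.prod_eq_one fun l _ => ?_
    have h0 : (if k < l then (Pi.single i 1 : Fin n → ℤ) k * (Pi.single j 1 : Fin n → ℤ) l
        - (Pi.single j 1 : Fin n → ℤ) k * (Pi.single i 1 : Fin n → ℤ) l else 0) = 0 := by
      rcases eq_or_ne k j with rfl | hkj
      · rcases eq_or_ne l i with rfl | hli
        · rw [if_neg (asymm hij)]
        · simp [Pi.single_eq_of_ne hk, Pi.single_eq_of_ne hli]
      · simp [Pi.single_eq_of_ne hk, Pi.single_eq_of_ne hkj]
    rw [h0, zpow_zero]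
  · intro hi; exact absurd (Finset.mem_univ i) hi

lemma eq_one_of_psi_eq_one {g : FreeNilpotent2 n} (hg : psi n g = 1) : g = 1 := by
  have h0 : (psi n g).a = 0 := by rw [hg]; rfl
  have hgD : g ∈ Subgroup.closure (genC n) :=
    commutator_le_D n (mem_commutator_of_psi_a_eq_zero n h0)
  have P : ∀ d ∈ Subgroup.closure (genC n),
      (psi n d).a = 0 ∧
        ((sig n ((psi n d).c) : Subgroup.center (FreeNilpotent2 n)) : FreeNilpotent2 n) = d := by
    intro d hd
    induction hd using Subgroup.closure_induction with
    | mem x hx =>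
      obtain ⟨i, j, rfl⟩ := hx
      refine ⟨by rw [map_commutatorElement]; exact Hg.commutator_a _ _, ?_⟩
      rw [map_commutatorElement, psi_yy, psi_yy]
      have hc : (⁅gen i, gen (n := n) j⁆).c
          = fun k l => (Pi.single i 1 : Fin n → ℤ) k * (Pi.single j 1 : Fin n → ℤ) l
            - (Pi.single j 1 : Fin n → ℤ) k * (Pi.single i 1 : Fin n → ℤ) l := by
        rw [Hg.commutator_c]
        simp only [gen_a]
      rcases lt_trichotomy i j with hij | rfl | hji
      · rw [hc, sig_basis n hij, cel_coe]
      · have : (⁅gen (n := n) i, gen i⁆) = 1 := commutatorElement_self _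
        rw [this, Hg.one_c, sig_zero, commutatorElement_self]
        rfl
      · have hc' : (⁅gen i, gen (n := n) j⁆).c
            = -(fun k l => (Pi.single j 1 : Fin n → ℤ) k * (Pi.single i 1 : Fin n → ℤ) l
              - (Pi.single i 1 : Fin n → ℤ) k * (Pi.single j 1 : Fin n → ℤ) l) := by
          rw [hc]
          funext k l
          simp only [Pi.neg_apply]
          ring
        rw [hc', sig_neg, sig_basis n hji]
        rw [← commutatorElement_inv]
        rfl
    | one =>
      refine ⟨by rw [map_one]; rfl, ?_⟩
      have : (psi n (1 : FreeNilpotent2 n)).c = 0 := by rw [map_one]; rfl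
      rw [this, sig_zero]
      rfl
    | mul x z hx hz ihx ihz =>
      obtain ⟨hxa, hxs⟩ := ihx
      obtain ⟨hza, hzs⟩ := ihz
      refine ⟨by rw [map_mul, Hg.mul_a, hxa, hza]; simp, ?_⟩
      have hcsum : (psi n (x * z)).c = (psi n x).c + (psi n z).c := by
        rw [map_mul, Hg.mul_c, hxa]
        funext k l
        simp
      rw [hcsum, sig_add, Subgroup.coe_mul, hxs, hzs]
    | inv x hx ihx =>
      obtain ⟨hxa, hxs⟩ := ihx
      refine ⟨by rw [map_inv, Hg.inv_a, hxa]; simp, ?_⟩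
      have hcneg : (psi n x⁻¹).c = -(psi n x).c := by
        rw [map_inv, Hg.inv_c, hxa]
        funext k l
        simp
      rw [hcneg, sig_neg, Subgroup.coe_inv, hxs]
  obtain ⟨-, hs⟩ := P g hgD
  rw [← hs, hg]
  have : ((1 : Hg n)).c = 0 := rfl
  rw [this, sig_zero]
  rfl

end FN2Aux

/-- The free nilpotent group of class 2 of rank `n` embeds into
`UT_{2n+1}(ℤ)`. -/
theorem freeNilpotent2_embeds_in_unitriangular (n : ℕ) :
    ∃ φ : FreeNilpotent2 n →* (Matrix (Fin (2 * n + 1)) (Fin (2 * n + 1)) ℤ)ˣ,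
      Function.Injective φ ∧
      ∀ g : FreeNilpotent2 n,
        IsUnitriangular ((φ g : Matrix (Fin (2 * n + 1)) (Fin (2 * n + 1)) ℤ)) := by
  refine ⟨FN2Aux.matU.comp (FN2Aux.psi n), ?_, ?_⟩
  · rw [injective_iff_map_eq_one]
    intro g hg1
    apply FN2Aux.eq_one_of_psi_eq_one n
    have hval : FN2Aux.matM (FN2Aux.psi n g) = 1 := by
      have := congrArg Units.val hg1
      simpa using this
    have h1 : FN2Aux.matM (FN2Aux.psi n g) = FN2Aux.matM 1 := by
      rw [hval, map_one]
    exact FN2Aux.matM_injective h1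
  · intro g
    constructor
    · intro i
      exact FN2Aux.matM_diag _ i
    · intro i j hji
      exact FN2Aux.matM_lower _ hji
end
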